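/- arXiv:math/0404142 — 2 statements merged into one kernel-verified Lean document; each statement's English description precedes it below -/
import Mathlib

section
/- Let Q be a symmetric d×d matrix and G a group of d×d permutation matrices such that PᵀQP = Q for all P ∈ G. Then min{Tr(QX) : X ∈ C*, Tr(eeᵀX) = 1} = min{Tr(QY) : Y ∈ C* ∩ A, Tr(eeᵀY) = 1}, where C* is the cone of completely positive matrices, e is the all-ones vector, and A = {(1/|G|)Σ_{P∈G} PᵀXP : X symmetric} is the fixed-point subspace. -/
open Matrix

/-- A symmetric matrix is completely positive if it is a finite sum of matrices
`y yᵀ` with `y ≥ 0` componentwise. -/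
def CompletelyPositive {d : ℕ} (X : Matrix (Fin d) (Fin d) ℝ) : Prop :=
  ∃ (k : ℕ) (y : Fin k → Fin d → ℝ),
    (∀ i j, 0 ≤ y i j) ∧ X = ∑ i, Matrix.vecMulVec (y i) (y i)

/-- The all-ones matrix `eeᵀ`. -/
def J (d : ℕ) : Matrix (Fin d) (Fin d) ℝ := Matrix.of fun _ _ => 1

lemma trace_submatrix_equiv' {d : ℕ} (M : Matrix (Fin d) (Fin d) ℝ) (e : Equiv.Perm (Fin d)) :
    Matrix.trace (M.submatrix e e) = Matrix.trace M := by
  simp only [Matrix.trace, Matrix.diag, Matrix.submatrix_apply]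
  exact Equiv.sum_comp e (fun i => M i i)

lemma trace_mul_submatrix {d : ℕ} (A B : Matrix (Fin d) (Fin d) ℝ) (e : Equiv.Perm (Fin d)) :
    Matrix.trace (A.submatrix e e * B.submatrix e e) = Matrix.trace (A * B) := by
  rw [Matrix.submatrix_mul_equiv, trace_submatrix_equiv']

lemma CP_zero {d : ℕ} : CompletelyPositive (0 : Matrix (Fin d) (Fin d) ℝ) :=
  ⟨0, fun i _ => 0, fun i => i.elim0, by simp⟩

lemma CP_add {d : ℕ} {X Y : Matrix (Fin d) (Fin d) ℝ} (hX : CompletelyPositive X)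
    (hY : CompletelyPositive Y) : CompletelyPositive (X + Y) := by
  obtain ⟨k, y, hy, rfl⟩ := hX
  obtain ⟨l, z, hz, rfl⟩ := hY
  refine ⟨k + l, Fin.append y z, ?_, ?_⟩
  · intro i j
    refine Fin.addCases (motive := fun i => 0 ≤ Fin.append y z i j) ?_ ?_ i
    · intro i; simp [Fin.append_left, hy]
    · intro i; simp [Fin.append_right, hz]
  · rw [Fin.sum_univ_add]
    simp [Fin.append_left, Fin.append_right]

lemma CP_smul {d : ℕ} {c : ℝ} (hc : 0 ≤ c) {X : Matrix (Fin d) (Fin d) ℝ}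
    (hX : CompletelyPositive X) : CompletelyPositive (c • X) := by
  obtain ⟨k, y, hy, rfl⟩ := hX
  refine ⟨k, fun i j => Real.sqrt c * y i j, fun i j => mul_nonneg (Real.sqrt_nonneg c) (hy i j),
    ?_⟩
  rw [Finset.smul_sum]
  refine Finset.sum_congr rfl fun i _ => ?_
  ext a b
  simp only [Matrix.smul_apply, Matrix.vecMulVec_apply, smul_eq_mul]
  rw [show Real.sqrt c * y i a * (Real.sqrt c * y i b)
      = (Real.sqrt c * Real.sqrt c) * (y i a * y i b) by ring,
    Real.mul_self_sqrt hc]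

lemma CP_sum {d : ℕ} {ι : Type*} (s : Finset ι) (f : ι → Matrix (Fin d) (Fin d) ℝ)
    (hf : ∀ i ∈ s, CompletelyPositive (f i)) : CompletelyPositive (∑ i ∈ s, f i) := by
  classical
  induction s using Finset.induction_on with
  | empty => simpa using CP_zero
  | insert _ _ h ih =>
    rw [Finset.sum_insert h]
    exact CP_add (hf _ (Finset.mem_insert_self _ _))
      (ih fun i hi => hf i (Finset.mem_insert_of_mem hi))

lemma CP_submatrix {d : ℕ} {X : Matrix (Fin d) (Fin d) ℝ} (hX : CompletelyPositive X)
    (e : Equiv.Perm (Fin d)) : CompletelyPositive (X.submatrix e e) := by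
  obtain ⟨k, y, hy, rfl⟩ := hX
  refine ⟨k, fun i => y i ∘ e, fun i j => hy i (e j), ?_⟩
  ext a b
  simp [Matrix.submatrix_apply, Matrix.sum_apply, Matrix.vecMulVec_apply]

lemma CP_isSymm {d : ℕ} {X : Matrix (Fin d) (Fin d) ℝ} (hX : CompletelyPositive X) :
    X.IsSymm := by
  obtain ⟨k, y, hy, rfl⟩ := hX
  unfold Matrix.IsSymm
  ext a b
  simp only [Matrix.transpose_apply, Matrix.sum_apply, Matrix.vecMulVec_apply]
  exact Finset.sum_congr rfl fun i _ => mul_comm _ _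

lemma J_submatrix {d : ℕ} (e : Equiv.Perm (Fin d)) : (J d).submatrix e e = J d := rfl

/-- Symmetry reduction: if `Q` is invariant under a group `G` of permutation matrices,
the completely positive program may be restricted to the fixed-point subspace
`A = {(1/|G|) Σ_{P∈G} PᵀXP : X symmetric}`. -/
theorem symmetry_reduction {d : ℕ} {G : Type*} [Group G] [Fintype G]
    (φ : G →* Equiv.Perm (Fin d)) (Q : Matrix (Fin d) (Fin d) ℝ)
    (hQsym : Q.IsSymm) (hQinv : ∀ g : G, Q.submatrix (φ g) (φ g) = Q) :
    sInf {v : ℝ | ∃ X : Matrix (Fin d) (Fin d) ℝ, CompletelyPositive X ∧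
        Matrix.trace (J d * X) = 1 ∧ v = Matrix.trace (Q * X)} =
    sInf {v : ℝ | ∃ X : Matrix (Fin d) (Fin d) ℝ, CompletelyPositive X ∧
        Matrix.trace (J d * X) = 1 ∧
        (∃ Y : Matrix (Fin d) (Fin d) ℝ, Y.IsSymm ∧
          X = ((Fintype.card G : ℝ))⁻¹ • ∑ g : G, Y.submatrix (φ g) (φ g)) ∧
        v = Matrix.trace (Q * X)} := by
  congr 1
  ext v
  constructor
  · rintro ⟨X, hX, hJ, rfl⟩
    have hcard : (0:ℝ) < (Fintype.card G : ℝ) := by positivity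
    set c : ℝ := ((Fintype.card G : ℝ))⁻¹ with hc
    set Xb : Matrix (Fin d) (Fin d) ℝ := c • ∑ g : G, X.submatrix (φ g) (φ g) with hXb
    have hQX : ∀ g : G, Matrix.trace (Q * X.submatrix (φ g) (φ g)) = Matrix.trace (Q * X) := by
      intro g
      conv_lhs => rw [← hQinv g]
      exact trace_mul_submatrix Q X (φ g)
    have hJX : ∀ g : G, Matrix.trace (J d * X.submatrix (φ g) (φ g)) = Matrix.trace (J d * X) := by
      intro g
      conv_lhs => rw [← J_submatrix (d := d) (φ g)]
      exact trace_mul_submatrix (J d) X (φ g)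
    have htr : ∀ A : Matrix (Fin d) (Fin d) ℝ,
        (∀ g : G, Matrix.trace (A * X.submatrix (φ g) (φ g)) = Matrix.trace (A * X)) →
        Matrix.trace (A * Xb) = Matrix.trace (A * X) := by
      intro A hA
      rw [hXb, Matrix.mul_smul, Matrix.trace_smul, Matrix.mul_sum, Matrix.trace_sum]
      simp only [hA]
      rw [Finset.sum_const, Finset.card_univ, nsmul_eq_mul, smul_eq_mul, hc]
      field_simp
    refine ⟨Xb, ?_, ?_, ⟨X, CP_isSymm hX, hXb⟩, (htr Q hQX).symm⟩
    · exact CP_smul (le_of_lt (inv_pos.mpr hcard)) (CP_sum _ _ fun g _ => CP_submatrix hX (φ g))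
    · rw [htr (J d) hJX, hJ]
  · rintro ⟨X, hX, hJ, _, rfl⟩
    exact ⟨X, hX, hJ, rfl⟩
end

section
/- Let Q be a symmetric d×d matrix. If there exist a real t, a real vector y ∈ ℝ^M, symmetric 0-1 matrices A₁,…,A_M summing to eeᵀ with Q = Σᵢ bᵢAᵢ, such that bᵢ − t − yᵢ ≥ 0 for all i and Σᵢ yᵢAᵢ is positive semidefinite, then xᵀQx ≥ t for all x in the standard simplex. -/
open Matrix

/-- The SDP relaxation certificate: if `Q = Σᵢ bᵢAᵢ` for symmetric 0-1 matrices `Aᵢ`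
summing to `eeᵀ`, and there are `t` and `y` with `bᵢ - t - yᵢ ≥ 0` for all `i` and
`Σᵢ yᵢAᵢ` positive semidefinite, then `xᵀQx ≥ t` on the standard simplex. -/
theorem certificate_lower_bound {d M : ℕ}
    (A : Fin M → Matrix (Fin d) (Fin d) ℝ)
    (hAsym : ∀ i, (A i).IsSymm)
    (hA01 : ∀ i k l, A i k l = 0 ∨ A i k l = 1)
    (hAsum : (∑ i, A i) = J d)
    (b : Fin M → ℝ) (Q : Matrix (Fin d) (Fin d) ℝ) (hQ : Q.IsSymm)
    (hQdecomp : Q = ∑ i, b i • A i)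
    (t : ℝ) (y : Fin M → ℝ)
    (hby : ∀ i, 0 ≤ b i - t - y i)
    (hpsd : (∑ i, y i • A i).PosSemidef) :
    ∀ x : Fin d → ℝ, (∀ i, 0 ≤ x i) → (∑ i, x i) = 1 →
      t ≤ x ⬝ᵥ Q.mulVec x := by
  intro x hx hx1
  set m : Fin M → ℝ := fun i => x ⬝ᵥ (A i).mulVec x with hm
  have hquad : ∀ (N : Matrix (Fin d) (Fin d) ℝ),
      x ⬝ᵥ N.mulVec x = ∑ k, ∑ l, x k * (N k l * x l) := by
    intro N
    simp [dotProduct, Matrix.mulVec, Finset.mul_sum]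
  have swap : ∀ f : Fin d → Fin d → Fin M → ℝ,
      ∑ k, ∑ l, ∑ i, f k l i = ∑ i, ∑ k, ∑ l, f k l i := by
    intro f
    have h1 : ∀ k, ∑ l, ∑ i, f k l i = ∑ i, ∑ l, f k l i := fun k => Finset.sum_comm
    simp_rw [h1]
    exact Finset.sum_comm
  have hmsum : ∀ (c : Fin M → ℝ),
      x ⬝ᵥ (∑ i, c i • A i).mulVec x = ∑ i, c i * m i := by
    intro c
    rw [hquad]
    simp only [Matrix.sum_apply, Matrix.smul_apply, smul_eq_mul,
      Finset.sum_mul, Finset.mul_sum]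
    rw [swap]
    refine Finset.sum_congr rfl fun i _ => ?_
    simp only [hm, hquad, Finset.mul_sum]
    refine Finset.sum_congr rfl fun k _ => Finset.sum_congr rfl fun l _ => by ring
  have hQx : x ⬝ᵥ Q.mulVec x = ∑ i, b i * m i := by
    rw [hQdecomp, hmsum]
  have hmnn : ∀ i, 0 ≤ m i := by
    intro i
    have : m i = ∑ k, ∑ l, x k * (A i k l * x l) := by rw [hm]; exact hquad (A i)
    rw [this]
    apply Finset.sum_nonneg; intro k _
    apply Finset.sum_nonneg; intro l _
    have hA : 0 ≤ A i k l := by rcases hA01 i k l with h | h <;> simp [h]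
    have := hx k; have := hx l
    positivity
  have hJ : (∑ i, m i) = 1 := by
    have h2 : ∑ i, m i = x ⬝ᵥ (_root_.J d).mulVec x := by
      have := hmsum (fun _ => 1)
      simpa [hAsum] using this.symm
    rw [h2, hquad]
    simp only [_root_.J, Matrix.of_apply, one_mul]
    simp [← Finset.mul_sum, hx1]
  have hpsd' : 0 ≤ ∑ i, y i * m i := by
    rw [← hmsum]
    simpa using hpsd.dotProduct_mulVec_nonneg x
  have hmain : 0 ≤ ∑ i, (b i - t - y i) * m i := by
    apply Finset.sum_nonneg; intro i _
    exact mul_nonneg (hby i) (hmnn i)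
  have expand : ∑ i, b i * m i
      = (∑ i, (b i - t - y i) * m i) + t * (∑ i, m i) + ∑ i, y i * m i := by
    rw [Finset.mul_sum, ← Finset.sum_add_distrib, ← Finset.sum_add_distrib]
    refine Finset.sum_congr rfl fun i _ => by ring
  rw [hQx, expand, hJ]
  linarith
end
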